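/- Let D = diag(d₁,…,dₙ) with 0 < d₁ < d₂ < ⋯ < dₙ and let a, b ∈ ℝⁿ satisfy a_i b_i > 0 for all i. Set A = D + abᵀ. Then A has n real eigenvalues λ₁ < λ₂ < ⋯ < λₙ that strictly interlace the d_i: d₁ < λ₁ < d₂ < λ₂ < d₃ < ⋯ < dₙ < λₙ. In particular all eigenvalues of A are positive. -/

import Mathlib

open Matrix Polynomial Finset


lemma detDiagAddVMV {K : Type*} [Field K] {n : ℕ} (e u v : Fin n → K)
    (he : ∀ i, e i ≠ 0) :
    (Matrix.diagonal e + Matrix.vecMulVec u v).det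
      = ∏ i, e i + ∑ i, u i * v i * ∏ j ∈ Finset.univ.erase i, e j := by
  have h1 : Matrix.diagonal e + Matrix.vecMulVec u v
      = Matrix.diagonal e * (1 + Matrix.vecMulVec (fun i => u i / e i) v) := by
    ext i j
    rw [Matrix.add_apply, Matrix.diagonal_mul, Matrix.add_apply, Matrix.vecMulVec_apply,
      Matrix.vecMulVec_apply, mul_add]
    have hei := he i
    rcases eq_or_ne i j with rfl | hij
    · rw [Matrix.one_apply_eq, Matrix.diagonal_apply_eq]
      field_simp
    · rw [Matrix.one_apply_ne hij, Matrix.diagonal_apply_ne _ hij]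
      field_simp
      ring
  rw [h1, Matrix.det_mul, Matrix.det_diagonal,
    Matrix.vecMulVec_eq Unit, Matrix.det_one_add_replicateCol_mul_replicateRow]
  rw [dotProduct, mul_add, mul_one, Finset.mul_sum]
  congr 1
  refine Finset.sum_congr rfl fun i _ => ?_
  have hei := he i
  rw [← Finset.mul_prod_erase Finset.univ e (Finset.mem_univ i)]
  field_simp

section
variable {n : ℕ} (d a b : Fin n → ℝ)



noncomputable def Qpoly : ℝ[X] :=
  ∏ i, (X - C (d i)) - ∑ i, C (a i * b i) * ∏ j ∈ Finset.univ.erase i, (X - C (d j))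

lemma Qpoly_eval (x : ℝ) : eval x (Qpoly d a b) =
    ∏ i, (x - d i) - ∑ i, (a i * b i) * ∏ j ∈ Finset.univ.erase i, (x - d j) := by
  simp [Qpoly, eval_prod, eval_finset_sum]

lemma P0_monic : (∏ i, (X - C (d i))).Monic :=
  monic_prod_of_monic _ _ fun i _ => monic_X_sub_C _

lemma P0_degree : (∏ i, (X - C (d i))).degree = (n : WithBot ℕ) := by
  rw [degree_prod]
  simp [degree_X_sub_C]

lemma S_degree_lt :
    (∑ i, C (a i * b i) * ∏ j ∈ Finset.univ.erase i, (X - C (d j))).degree < (n : ℕ) := by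
  refine lt_of_le_of_lt (degree_sum_le _ _) ?_
  rw [Finset.sup_lt_iff (by exact_mod_cast WithBot.bot_lt_coe n)]
  intro i _
  refine lt_of_le_of_lt (degree_mul_le _ _) ?_
  have h2 : (∏ j ∈ Finset.univ.erase i, (X - C (d j))).degree = ((n - 1 : ℕ) : WithBot ℕ) := by
    rw [degree_prod]
    simp only [degree_X_sub_C, Finset.sum_const, nsmul_eq_mul, mul_one]
    rw [Finset.card_erase_of_mem (Finset.mem_univ i), Finset.card_univ, Fintype.card_fin]
  rw [h2]
  have h1 : (C (a i * b i)).degree ≤ 0 := degree_C_le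
  calc (C (a i * b i)).degree + ((n-1:ℕ) : WithBot ℕ) ≤ 0 + ((n-1:ℕ) : WithBot ℕ) := by
        exact add_le_add h1 le_rfl
    _ = ((n-1:ℕ) : WithBot ℕ) := by rw [zero_add]
    _ < (n : ℕ) := by
        exact_mod_cast Nat.sub_lt (Fin.pos i) Nat.one_pos

lemma Q_monic : (Qpoly d a b).Monic := by
  refine (P0_monic d).sub_of_left ?_
  rw [P0_degree]; exact S_degree_lt d a b

lemma Q_degree : (Qpoly d a b).degree = (n : ℕ) := by
  rw [Qpoly, degree_sub_eq_left_of_degree_lt, P0_degree]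
  rw [P0_degree]; exact S_degree_lt d a b

lemma Q_natDegree : (Qpoly d a b).natDegree = n :=
  natDegree_eq_of_degree_eq_some (Q_degree d a b)


def tnum (k : Fin n) : ℕ := (Finset.univ.filter (fun j => k < j)).card

lemma tnum_succ (k : Fin n) (hk : (k : ℕ) + 1 < n) :
    tnum k = tnum (⟨(k : ℕ) + 1, hk⟩ : Fin n) + 1 := by
  set k' : Fin n := ⟨(k : ℕ) + 1, hk⟩
  have h1 : Finset.univ.filter (fun j => k < j)
      = insert k' (Finset.univ.filter (fun j => k' < j)) := by
    ext j
    simp only [Finset.mem_filter, Finset.mem_univ, true_and, Finset.mem_insert, Fin.lt_def,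
      Fin.ext_iff]
    show (k : ℕ) < (j : ℕ) ↔ (j : ℕ) = (k : ℕ) + 1 ∨ (k : ℕ) + 1 < (j : ℕ)
    omega
  rw [tnum, h1, Finset.card_insert_of_notMem (by simp), tnum]

lemma tnum_top (k : Fin n) (hk : ¬ ((k : ℕ) + 1 < n)) : tnum k = 0 := by
  rw [tnum, Finset.card_eq_zero]
  ext j
  simp only [Finset.mem_filter, Finset.mem_univ, true_and, Finset.notMem_empty, iff_false,
    Fin.lt_def]
  have := j.isLt
  omega

lemma eval_at_d (hd : StrictMono d) (hab : ∀ i, 0 < a i * b i) (k : Fin n) :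
    ∃ r : ℝ, 0 < r ∧ eval (d k) (Qpoly d a b) = (-1 : ℝ) ^ (tnum k + 1) * r := by
  have h0 : ∏ i, (d k - d i) = 0 :=
    Finset.prod_eq_zero (Finset.mem_univ k) (sub_self _)
  have hsum : ∑ i, (a i * b i) * ∏ j ∈ Finset.univ.erase i, (d k - d j)
      = (a k * b k) * ∏ j ∈ Finset.univ.erase k, (d k - d j) := by
    refine Finset.sum_eq_single k (fun i _ hik => ?_) (by simp)
    rw [Finset.prod_eq_zero (Finset.mem_erase.2 ⟨Ne.symm hik, Finset.mem_univ k⟩)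
      (sub_self (d k)), mul_zero]
  have hsplit : ∏ j ∈ Finset.univ.erase k, (d k - d j)
      = (∏ j ∈ Finset.univ.filter (fun j => j < k), (d k - d j))
        * ∏ j ∈ Finset.univ.filter (fun j => k < j), (d k - d j) := by
    rw [← Finset.prod_filter_mul_prod_filter_not (Finset.univ.erase k) (fun j => j < k)]
    congr 1
    · apply Finset.prod_congr _ (fun _ _ => rfl)
      ext j
      simp only [Finset.mem_filter, Finset.mem_erase, Finset.mem_univ, true_and, and_true,
        Fin.lt_def, Fin.ext_iff, and_iff_right_iff_imp]
      omega
    · apply Finset.prod_congr _ (fun _ _ => rfl)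
      ext j
      simp only [Finset.mem_filter, Finset.mem_erase, Finset.mem_univ, true_and, and_true,
        Fin.lt_def, Fin.ext_iff, not_lt]
      omega
  have hA : 0 < ∏ j ∈ Finset.univ.filter (fun j => j < k), (d k - d j) := by
    refine Finset.prod_pos fun j hj => ?_
    have : j < k := (Finset.mem_filter.1 hj).2
    exact sub_pos.2 (hd this)
  have hB : ∏ j ∈ Finset.univ.filter (fun j => k < j), (d k - d j)
      = (-1 : ℝ) ^ (tnum k) * ∏ j ∈ Finset.univ.filter (fun j => k < j), (d j - d k) := by
    rw [tnum, ← Finset.prod_const, ← Finset.prod_mul_distrib]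
    exact Finset.prod_congr rfl fun j _ => by ring
  have hB' : 0 < ∏ j ∈ Finset.univ.filter (fun j => k < j), (d j - d k) := by
    refine Finset.prod_pos fun j hj => ?_
    have : k < j := (Finset.mem_filter.1 hj).2
    exact sub_pos.2 (hd this)
  refine ⟨(a k * b k) * ((∏ j ∈ Finset.univ.filter (fun j => j < k), (d k - d j))
      * ∏ j ∈ Finset.univ.filter (fun j => k < j), (d j - d k)),
    mul_pos (hab k) (mul_pos hA hB'), ?_⟩
  rw [Qpoly_eval, h0, hsum, hsplit, hB, zero_sub, pow_succ]
  ring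


lemma exists_root_Ioo {f : ℝ → ℝ} (hf : Continuous f) {x y : ℝ} (hxy : x < y)
    (hsign : f x * f y < 0) : ∃ z ∈ Set.Ioo x y, f z = 0 := by
  rcases lt_or_ge (f x) 0 with hx | hx
  · have hy : 0 < f y := by
      by_contra h
      nlinarith [not_lt.1 h]
    have := intermediate_value_Ioo hxy.le hf.continuousOn (a := x) (b := y)
    obtain ⟨z, hz, hz0⟩ := this ⟨hx, hy⟩
    exact ⟨z, hz, hz0⟩
  · have hx' : 0 < f x := by
      rcases hx.lt_or_eq with h | h
      · exact h
      · exfalso; rw [← h] at hsign; simp at hsign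
    have hy : f y < 0 := by
      by_contra h
      exact absurd hsign (not_lt.2 (mul_nonneg hx (not_lt.1 h)))
    obtain ⟨z, hz, hz0⟩ := intermediate_value_Ioo' hxy.le hf.continuousOn (a := x) (b := y)
      ⟨hy, hx'⟩
    exact ⟨z, hz, hz0⟩

lemma root_exists (hd : StrictMono d) (hab : ∀ i, 0 < a i * b i) (k : Fin n) :
    ∃ x : ℝ, (d k < x ∧ ∀ h : (k : ℕ) + 1 < n, x < d ⟨(k : ℕ) + 1, h⟩)
      ∧ eval x (Qpoly d a b) = 0 := by
  have hcont : Continuous fun x : ℝ => eval x (Qpoly d a b) := by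
    exact Polynomial.continuous _
  obtain ⟨r, hr, hek⟩ := eval_at_d d a b hd hab k
  by_cases hk : (k : ℕ) + 1 < n
  · set k' : Fin n := ⟨(k : ℕ) + 1, hk⟩
    obtain ⟨r', hr', hek'⟩ := eval_at_d d a b hd hab k'
    have hdk : d k < d k' := hd (by simp [Fin.lt_def, k'])
    have hsign : eval (d k) (Qpoly d a b) * eval (d k') (Qpoly d a b) < 0 := by
      rw [hek, hek', tnum_succ k hk]
      have : (-1 : ℝ) ^ (tnum k' + 1 + 1) * r * ((-1 : ℝ) ^ (tnum k' + 1) * r')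
          = (-1 : ℝ) ^ (2 * (tnum k' + 1) + 1) * (r * r') := by ring
      rw [this, Odd.neg_one_pow ⟨tnum k' + 1, by ring⟩]
      nlinarith
    obtain ⟨z, hz, hz0⟩ := exists_root_Ioo hcont hdk hsign
    exact ⟨z, ⟨hz.1, fun _ => hz.2⟩, hz0⟩
  · have hneg : eval (d k) (Qpoly d a b) < 0 := by
      rw [hek, tnum_top k hk]
      simpa using neg_neg_iff_pos.2 hr
    have htend : Filter.Tendsto (fun x : ℝ => eval x (Qpoly d a b)) Filter.atTop
        Filter.atTop := by
      refine Polynomial.tendsto_atTop_of_leadingCoeff_nonneg _ ?_ ?_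
      · rw [Q_degree]
        have hn : 0 < n := Nat.pos_of_ne_zero (by rintro rfl; exact k.elim0)
        exact_mod_cast Nat.cast_pos.2 hn
      · rw [(Q_monic d a b).leadingCoeff]; norm_num
    obtain ⟨y, hy1, hy2⟩ := ((Filter.eventually_gt_atTop (d k)).and
      (htend.eventually_gt_atTop 0)).exists
    have hsign : eval (d k) (Qpoly d a b) * eval y (Qpoly d a b) < 0 :=
      mul_neg_of_neg_of_pos hneg hy2
    obtain ⟨z, hz, hz0⟩ := exists_root_Ioo hcont hy1 hsign
    exact ⟨z, ⟨hz.1, fun h => absurd h hk⟩, hz0⟩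


end

lemma charpolyDiagAddVMV {n : ℕ} (d a b : Fin n → ℝ) :
    (Matrix.diagonal d + Matrix.vecMulVec a b).charpoly = Qpoly d a b := by
  rw [Qpoly]
  set K := FractionRing ℝ[X]
  have hf : Function.Injective (algebraMap ℝ[X] K) := IsFractionRing.injective ℝ[X] K
  apply hf
  set f := algebraMap ℝ[X] K
  have hchar : charmatrix (Matrix.diagonal d + Matrix.vecMulVec a b)
      = Matrix.diagonal (fun i => X - C (d i))
        + Matrix.vecMulVec (fun i => -C (a i)) (fun i => C (b i)) := by
    ext i j
    rcases eq_or_ne i j with rfl | hij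
    · simp [charmatrix_apply_eq, Matrix.vecMulVec_apply, Matrix.diagonal_apply_eq]
      ring
    · simp [charmatrix_apply_ne _ _ _ hij, Matrix.vecMulVec_apply,
        Matrix.diagonal_apply_ne _ hij, hij]
  rw [Matrix.charpoly, hchar, RingHom.map_det]
  have hmap : (Matrix.diagonal (fun i => X - C (d i))
        + Matrix.vecMulVec (fun i => -C (a i)) (fun i => C (b i))).map f
      = Matrix.diagonal (fun i => f (X - C (d i)))
        + Matrix.vecMulVec (fun i => f (-C (a i))) (fun i => f (C (b i))) := by
    ext i j
    rcases eq_or_ne i j with rfl | hij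
    · simp [Matrix.vecMulVec_apply]
      ring
    · simp [Matrix.vecMulVec_apply, Matrix.diagonal_apply_ne _ hij, hij]
      ring
  rw [RingHom.mapMatrix_apply, hmap, detDiagAddVMV]
  · simp only [map_sub, map_sum, map_prod, _root_.map_mul, map_neg]
    rw [sub_eq_add_neg, ← Finset.sum_neg_distrib]
    congr 1
    refine Finset.sum_congr rfl fun i _ => ?_
    ring
  · intro i
    simp only [ne_eq, map_eq_zero_iff f hf]
    exact X_sub_C_ne_zero (d i)

/-- Interlacing: for `A = D + a bᵀ` with `0 < d₁ < ⋯ < dₙ` and `a i * b i > 0` for all `i`,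
the matrix `A` has `n` real eigenvalues `λ₁ < ⋯ < λₙ` (the roots of its characteristic
polynomial) which strictly interlace the `d i`:
`d₁ < λ₁ < d₂ < λ₂ < ⋯ < dₙ < λₙ`; in particular all eigenvalues are positive. -/
theorem stmt_3 (n : ℕ) (d a b : Fin n → ℝ)
    (hd : StrictMono d) (hd0 : ∀ i, 0 < d i) (hab : ∀ i, 0 < a i * b i) :
    ∃ lam : Fin n → ℝ, StrictMono lam ∧
      (Matrix.diagonal d + Matrix.vecMulVec a b).charpoly = ∏ i, (X - C (lam i)) ∧
      (∀ i, d i < lam i) ∧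
      (∀ i : Fin n, ∀ h : (i : ℕ) + 1 < n, lam i < d ⟨(i : ℕ) + 1, h⟩) ∧
      (∀ i, 0 < lam i) := by
  classical
  set lam : Fin n → ℝ := fun k => (root_exists d a b hd hab k).choose with hlam
  have hspec : ∀ k, (d k < lam k ∧ ∀ h : (k : ℕ) + 1 < n, lam k < d ⟨(k : ℕ) + 1, h⟩)
      ∧ eval (lam k) (Qpoly d a b) = 0 := fun k => (root_exists d a b hd hab k).choose_spec
  have hdlt : ∀ k, d k < lam k := fun k => (hspec k).1.1
  have hup : ∀ k : Fin n, ∀ h : (k : ℕ) + 1 < n, lam k < d ⟨(k : ℕ) + 1, h⟩ :=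
    fun k => (hspec k).1.2
  have hmono : StrictMono lam := by
    intro i j hij
    have hij' : (i : ℕ) + 1 ≤ (j : ℕ) := hij
    have hin : (i : ℕ) + 1 < n := lt_of_le_of_lt hij' j.isLt
    calc lam i < d ⟨(i : ℕ) + 1, hin⟩ := hup i hin
      _ ≤ d j := hd.monotone (by simp [Fin.le_def]; omega)
      _ < lam j := hdlt j
  have hQ0 : Qpoly d a b ≠ 0 := (Q_monic d a b).ne_zero
  have hinj : Function.Injective lam := hmono.injective
  have himle : (Finset.univ.image lam).val ≤ (Qpoly d a b).roots := by
    rw [Multiset.le_iff_subset (Finset.univ.image lam).nodup]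
    intro x hx
    obtain ⟨i, _, rfl⟩ := Finset.mem_image.1 (Finset.mem_def.2 hx)
    exact (Polynomial.mem_roots hQ0).2 (hspec i).2
  have hcard : (Finset.univ.image lam).card = n := by
    rw [Finset.card_image_of_injective _ hinj, Finset.card_univ, Fintype.card_fin]
  have hrootscard : (Qpoly d a b).roots.card ≤ n := by
    have := (Qpoly d a b).card_roots'
    rwa [Q_natDegree] at this
  have hroots : (Qpoly d a b).roots = (Finset.univ.image lam).val := by
    refine (Multiset.eq_of_le_of_card_le himle ?_).symm
    have : Multiset.card (Finset.univ.image lam).val = n := hcard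
    rw [this]
    exact hrootscard
  have hfact := prod_multiset_X_sub_C_of_monic_of_roots_card_eq (Q_monic d a b)
    (by rw [hroots, Q_natDegree]; exact hcard)
  refine ⟨lam, hmono, ?_, hdlt, hup, fun i => (hd0 i).trans (hdlt i)⟩
  rw [charpolyDiagAddVMV, ← hfact, hroots]
  rw [← Finset.prod_eq_multiset_prod]
  rw [Finset.prod_image (fun x _ y _ h => hinj h)]
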